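/- Let E_0(s,p) = s - log₂[p^{1/(1+s)} + (1-p)^{1/(1+s)}]^{1+s} and E(R,p) = max_{0 ≤ s ≤ 1} (-sR + E_0(s,p)). If 0 < p < 1/2 and R < 1 - h(p), where h is the binary entropy, then E(R,p) > 0. -/

import Mathlib

/-- Binary entropy (base-2 logarithm). -/
noncomputable def H2 (p : ℝ) : ℝ := -(p * Real.logb 2 p) - (1 - p) * Real.logb 2 (1 - p)

/-- Gallager's function `E₀(s,p)` for the binary symmetric channel. -/
noncomputable def E0 (s p : ℝ) : ℝ :=
  s - Real.logb 2 ((p ^ (1 / (1 + s)) + (1 - p) ^ (1 / (1 + s))) ^ (1 + s))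

/-- Gallager's reliability function `E(R,p) = max_{0≤s≤1}(-sR + E₀(s,p))` is
strictly positive when `0 < p < 1/2` and `R < 1 - h(p)`. -/
theorem stmt13 (p R : ℝ) (hp0 : 0 < p) (hp1 : p < 1 / 2) (hR : R < 1 - H2 p) :
    0 < sSup ((fun s => -s * R + E0 s p) '' Set.Icc (0 : ℝ) 1) := by
  have hq0 : 0 < 1 - p := by linarith
  have hlog2 : Real.log 2 ≠ 0 := (Real.log_pos (by norm_num)).ne'
  set G : ℝ → ℝ := fun s =>
    Real.exp (Real.log p / (1 + s)) + Real.exp (Real.log (1 - p) / (1 + s)) with hGdef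
  have hGpos : ∀ s, 0 < G s := fun s => by positivity
  set g : ℝ → ℝ := fun s => -(s * R) + s - (1 + s) * Real.log (G s) / Real.log 2 with hgdef
  have key : (fun s => -s * R + E0 s p) = g := by
    funext s
    have hFp : p ^ (1 / (1 + s)) = Real.exp (Real.log p / (1 + s)) := by
      rw [Real.rpow_def_of_pos hp0, mul_one_div]
    have hFq : (1 - p) ^ (1 / (1 + s)) = Real.exp (Real.log (1 - p) / (1 + s)) := by
      rw [Real.rpow_def_of_pos hq0, mul_one_div]
    simp only [E0, hgdef, hFp, hFq, hGdef]
    rw [Real.logb, Real.log_rpow (hGpos s)]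
    ring
  rw [key]
  have hG0 : G 0 = 1 := by
    simp [hGdef, Real.exp_log hp0, Real.exp_log hq0]
  have hg0 : g 0 = 0 := by simp [hgdef, hG0]
  -- derivative at 0
  have h1s : HasDerivAt (fun s : ℝ => 1 + s) 1 0 := by
    simpa using (hasDerivAt_id (0:ℝ)).const_add 1
  have hinv : HasDerivAt (fun s : ℝ => (1 + s)⁻¹) (-1) 0 := by
    have := h1s.inv (by norm_num)
    norm_num at this
    exact this
  have hep : HasDerivAt (fun s : ℝ => Real.exp (Real.log p / (1 + s))) (-(p * Real.log p)) 0 := by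
    have h := (hinv.const_mul (Real.log p)).exp
    simp only [div_eq_mul_inv]
    convert h using 1
    simp [Real.exp_log hp0]
  have heq : HasDerivAt (fun s : ℝ => Real.exp (Real.log (1 - p) / (1 + s)))
      (-((1 - p) * Real.log (1 - p))) 0 := by
    have h := (hinv.const_mul (Real.log (1 - p))).exp
    simp only [div_eq_mul_inv]
    convert h using 1
    simp [Real.exp_log hq0]
  have hG : HasDerivAt G (-(p * Real.log p) + -((1 - p) * Real.log (1 - p))) 0 := hep.add heq
  have hlogG : HasDerivAt (fun s => Real.log (G s))
      ((G 0)⁻¹ * (-(p * Real.log p) + -((1 - p) * Real.log (1 - p)))) 0 :=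
    (Real.hasDerivAt_log (hGpos 0).ne').comp 0 hG
  have hmul := h1s.mul hlogG
  have hdiv := hmul.div_const (Real.log 2)
  have ha : HasDerivAt (fun s : ℝ => -(s * R) + s) (-R + 1) 0 := by
    exact ((((hasDerivAt_id' (x := (0:ℝ))).mul_const R).neg).add (hasDerivAt_id' (x := (0:ℝ)))).congr_deriv (by ring)
  have hd : HasDerivAt g (1 - H2 p - R) 0 := by
    have h := ha.sub hdiv
    refine h.congr_deriv ?_
    rw [hG0]
    simp only [H2, Real.logb, Real.log_one]
    field_simp
    ring
  have hD : 0 < 1 - H2 p - R := by linarith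
  -- find s in (0,1] with g s > 0
  have hslope := hasDerivAt_iff_tendsto_slope.mp hd
  have hpos : ∀ᶠ s in nhdsWithin 0 {(0:ℝ)}ᶜ, 0 < slope g 0 s :=
    hslope.eventually (eventually_gt_nhds hD)
  have hpos' : ∀ᶠ s in nhdsWithin 0 (Set.Ioi (0:ℝ)), 0 < slope g 0 s :=
    hpos.filter_mono (nhdsWithin_mono 0 (fun x hx => ne_of_gt hx))
  have hIoc : ∀ᶠ s in nhdsWithin 0 (Set.Ioi (0:ℝ)), s ∈ Set.Ioc (0:ℝ) 1 :=
    Filter.eventually_mem_set.mpr (Ioc_mem_nhdsGT (by norm_num))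
  obtain ⟨s, hs1, hs2⟩ := (hpos'.and hIoc).exists
  have hspos : 0 < s := hs2.1
  have hgs : 0 < g s := by
    have h := hs1
    rw [slope_def_field] at h
    have h' : 0 < (g s - g 0) / (s - 0) := h
    rw [hg0, sub_zero, sub_zero] at h'
    calc (0:ℝ) = 0 * s := by ring
    _ < g s := (lt_div_iff₀ hspos).mp h'
  -- bounded above
  have hcont : ContinuousOn g (Set.Icc (0:ℝ) 1) := by
    have hne : ∀ x ∈ Set.Icc (0:ℝ) 1, 1 + x ≠ 0 := fun x hx => by nlinarith [hx.1]
    have hdc : ContinuousOn (fun s : ℝ => (1 + s)⁻¹) (Set.Icc (0:ℝ) 1) :=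
      (continuousOn_const.add continuousOn_id).inv₀ hne
    have hGc : ContinuousOn G (Set.Icc (0:ℝ) 1) := by
      simp only [hGdef, div_eq_mul_inv]
      exact ((hdc.const_mul (Real.log p)).rexp).add ((hdc.const_mul (Real.log (1 - p))).rexp)
    have hlogc : ContinuousOn (fun s => Real.log (G s)) (Set.Icc (0:ℝ) 1) :=
      hGc.log (fun x _ => (hGpos x).ne')
    simp only [hgdef]
    exact (((continuousOn_id.mul continuousOn_const).neg.add continuousOn_id).sub
      (((continuousOn_const.add continuousOn_id).mul hlogc).div_const _))
  have hbdd : BddAbove (g '' Set.Icc (0:ℝ) 1) := isCompact_Icc.bddAbove_image hcont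
  have hmem : g s ∈ g '' Set.Icc (0:ℝ) 1 := ⟨s, ⟨hspos.le, hs2.2⟩, rfl⟩
  exact lt_of_lt_of_le hgs (le_csSup hbdd hmem)
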